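/- There exists an orientation of the infinite grid ℤ×ℤ and a set S of broadcasting vertices of density 2/3 that forms an efficient directed (2,2) broadcast dominating set. -/
import Mathlib


/-- Adjacency in the infinite grid graph `ℤ × ℤ`. -/
def gridAdj (p q : ℤ × ℤ) : Prop := |p.1 - q.1| + |p.2 - q.2| = 1

/-- `A` is an orientation of the infinite grid graph. -/
def IsOrientationZ (A : ℤ × ℤ → ℤ × ℤ → Prop) : Prop :=
  (∀ u v, A u v → gridAdj u v) ∧ ∀ u v, gridAdj u v → (A u v ↔ ¬ A v u)

/-- The directed `(2,2)` reception at `w` from broadcast set `S`: a broadcast vertex of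
strength 2 gives itself signal 2 and each of its out-neighbors signal 1. -/
noncomputable def rec22 (A : ℤ × ℤ → ℤ × ℤ → Prop) (S : Set (ℤ × ℤ)) (w : ℤ × ℤ) : ℕ :=
  S.indicator (fun _ => 2) w + Set.ncard {v : ℤ × ℤ | v ∈ S ∧ A v w}

/-- `S` is a directed `(2,2)` broadcast dominating set of the oriented grid `A`. -/
def IsDom22 (A : ℤ × ℤ → ℤ × ℤ → Prop) (S : Set (ℤ × ℤ)) : Prop :=
  ∀ w, 2 ≤ rec22 A S w

/-- `S` is efficient (for `t = r = 2`): every vertex outside `S` has reception exactly 2. -/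
def IsEff22 (A : ℤ × ℤ → ℤ × ℤ → Prop) (S : Set (ℤ × ℤ)) : Prop :=
  ∀ w ∉ S, rec22 A S w = 2

/-- `S ⊆ ℤ × ℤ` has density `d`. -/
def HasDensity (S : Set (ℤ × ℤ)) (d : ℝ) : Prop :=
  Filter.Tendsto
    (fun n : ℕ =>
      (Set.ncard (S ∩ Set.Icc (-(n : ℤ)) (n : ℤ) ×ˢ Set.Icc (-(n : ℤ)) (n : ℤ)) : ℝ) /
        ((2 * (n : ℝ) + 1) ^ 2))
    Filter.atTop (nhds d)

/-! ### Auxiliary constructions -/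

/-- A convenient case description of adjacency in the grid. -/
lemma gridAdj_iff (u v : ℤ × ℤ) : gridAdj u v ↔
    ((u.2 = v.2 ∧ (v.1 = u.1 + 1 ∨ u.1 = v.1 + 1)) ∨
     (u.1 = v.1 ∧ (v.2 = u.2 + 1 ∨ u.2 = v.2 + 1))) := by
  unfold gridAdj
  rcases abs_cases (u.1 - v.1) with ⟨e1, _⟩ | ⟨e1, _⟩ <;>
    rcases abs_cases (u.2 - v.2) with ⟨e2, _⟩ | ⟨e2, _⟩ <;> rw [e1, e2] <;> omega

/-- The orientation: vertical edges point up; horizontal edges point towards the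
columns `≡ 2 (mod 3)`. -/
def ori (u v : ℤ × ℤ) : Prop :=
  gridAdj u v ∧ (v.2 = u.2 + 1 ∨ (u.2 = v.2 ∧
    ((v.1 = u.1 + 1 ∧ ¬ u.1 % 3 = 2) ∨ (u.1 = v.1 + 1 ∧ v.1 % 3 = 2))))

/-- The broadcast set: all columns except those `≡ 2 (mod 3)`. -/
def Scol : Set (ℤ × ℤ) := {p | ¬ p.1 % 3 = 2}

lemma ori_isOrientation : IsOrientationZ ori := by
  constructor
  · exact fun u v h => h.1
  · intro u v h
    have h' : gridAdj v u := by rw [gridAdj_iff] at h ⊢; tauto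
    simp only [ori, gridAdj_iff] at *
    omega

lemma inNbrs (w : ℤ × ℤ) (hw : w ∉ Scol) :
    {v : ℤ × ℤ | v ∈ Scol ∧ ori v w} = {(w.1 - 1, w.2), (w.1 + 1, w.2)} := by
  simp only [Scol, Set.mem_setOf_eq, not_not] at hw
  ext v
  simp only [Scol, Set.mem_setOf_eq, ori, gridAdj_iff, Set.mem_insert_iff,
    Set.mem_singleton_iff, Prod.ext_iff]
  omega

lemma ncard_inNbrs (w : ℤ × ℤ) (hw : w ∉ Scol) :
    Set.ncard {v : ℤ × ℤ | v ∈ Scol ∧ ori v w} = 2 := by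
  rw [inNbrs w hw]
  exact Set.ncard_pair (by simp; omega)

lemma rec22_eq (w : ℤ × ℤ) (hw : w ∉ Scol) : rec22 ori Scol w = 2 := by
  unfold rec22
  rw [Set.indicator_of_notMem hw, ncard_inNbrs w hw]

/-! ### Counting -/

lemma count_col (n : ℕ) :
    ((Finset.Icc (-(n:ℤ)) (n:ℤ)).filter (fun x => ¬ x % 3 = 2)).card
      = ((2*(n:ℤ)+1)/3 + (2*(n:ℤ))/3 + 1).toNat := by
  have himg : (Finset.Icc (-(n:ℤ)) (n:ℤ)).filter (fun x => ¬ x % 3 = 2)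
      = (Finset.Icc (-((2*(n:ℤ))/3)) ((2*(n:ℤ)+1)/3)).image (fun k => 3*(k/2) + k%2) := by
    ext x
    simp only [Finset.mem_filter, Finset.mem_Icc, Finset.mem_image]
    constructor
    · rintro ⟨⟨h1, h2⟩, h3⟩
      exact ⟨2*(x/3) + x%3, by omega, by omega⟩
    · rintro ⟨k, hk, rfl⟩
      omega
  rw [himg, Finset.card_image_of_injective _ (fun j k h => by omega), Int.card_Icc]
  congr 1
  ring

lemma box_count (n : ℕ) :
    Set.ncard (Scol ∩ Set.Icc (-(n : ℤ)) (n : ℤ) ×ˢ Set.Icc (-(n : ℤ)) (n : ℤ))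
      = ((2*(n:ℤ)+1)/3 + (2*(n:ℤ))/3 + 1).toNat * (2*n+1) := by
  have hset : Scol ∩ Set.Icc (-(n : ℤ)) (n : ℤ) ×ˢ Set.Icc (-(n : ℤ)) (n : ℤ)
      = ↑(((Finset.Icc (-(n:ℤ)) (n:ℤ)).filter (fun x => ¬ x % 3 = 2)) ×ˢ
          Finset.Icc (-(n:ℤ)) (n:ℤ)) := by
    ext ⟨x, y⟩
    simp only [Scol, Set.mem_inter_iff, Set.mem_setOf_eq, Set.mem_prod, Set.mem_Icc,
      Finset.coe_product, Finset.coe_filter, Finset.mem_Icc, Set.prodMk_mem_set_prod_eq,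
      Set.mem_setOf_eq, Finset.mem_coe]
    tauto
  rw [hset, Set.ncard_coe_finset, Finset.card_product, count_col, Int.card_Icc]
  congr 1
  omega

lemma density23 : HasDensity Scol (2/3) := by
  unfold HasDensity
  have hform : ∀ n : ℕ,
      (Set.ncard (Scol ∩ Set.Icc (-(n : ℤ)) (n : ℤ) ×ˢ Set.Icc (-(n : ℤ)) (n : ℤ)) : ℝ) /
          ((2 * (n : ℝ) + 1) ^ 2)
        = ((((2*(n:ℤ)+1)/3 + (2*(n:ℤ))/3 + 1) : ℤ) : ℝ) / (2 * (n:ℝ) + 1) := by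
    intro n
    have hk : (0:ℤ) ≤ (2*(n:ℤ)+1)/3 + (2*(n:ℤ))/3 + 1 := by omega
    have hD : (0:ℝ) < 2*(n:ℝ)+1 := by positivity
    have hk' : ((((2*(n:ℤ)+1)/3 + (2*(n:ℤ))/3 + 1).toNat : ℤ)) = (2*(n:ℤ)+1)/3 + (2*(n:ℤ))/3 + 1 :=
      Int.toNat_of_nonneg hk
    have h1 : ((((2*(n:ℤ)+1)/3 + (2*(n:ℤ))/3 + 1).toNat : ℕ) : ℝ)
        = ((((2*(n:ℤ)+1)/3 + (2*(n:ℤ))/3 + 1) : ℤ) : ℝ) := by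
      rw [← hk']; exact (Int.cast_natCast _).symm
    have hcast : (((((2*(n:ℤ)+1)/3 + (2*(n:ℤ))/3 + 1).toNat * (2*n+1) : ℕ)) : ℝ)
        = ((((2*(n:ℤ)+1)/3 + (2*(n:ℤ))/3 + 1) : ℤ) : ℝ) * (2*(n:ℝ)+1) := by
      rw [Nat.cast_mul, h1]
      push_cast
      ring
    rw [box_count n, hcast, pow_two, mul_div_mul_right _ _ (ne_of_gt hD)]
  rw [show (fun n : ℕ =>
        (Set.ncard (Scol ∩ Set.Icc (-(n : ℤ)) (n : ℤ) ×ˢ Set.Icc (-(n : ℤ)) (n : ℤ)) : ℝ) /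
          ((2 * (n : ℝ) + 1) ^ 2))
      = fun n : ℕ => ((((2*(n:ℤ)+1)/3 + (2*(n:ℤ))/3 + 1) : ℤ) : ℝ) / (2 * (n:ℝ) + 1)
    from funext hform]
  rw [tendsto_iff_dist_tendsto_zero]
  apply squeeze_zero (fun n => dist_nonneg) (g := fun n : ℕ => 2 / ((n:ℝ)+1))
  · intro n
    set k : ℤ := (2*(n:ℤ)+1)/3 + (2*(n:ℤ))/3 + 1 with hkdef
    have hbd : 4*(n:ℤ) ≤ 3*k ∧ 3*k ≤ 4*(n:ℤ) + 4 := by omega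
    have hb1 : 4*(n:ℝ) ≤ 3*(k:ℝ) := by exact_mod_cast hbd.1
    have hb2 : 3*(k:ℝ) ≤ 4*(n:ℝ) + 4 := by exact_mod_cast hbd.2
    have hD : (0:ℝ) < 2*(n:ℝ)+1 := by positivity
    have e : (k:ℝ)/(2*(n:ℝ)+1) - 2/3 = (3*(k:ℝ) - (4*(n:ℝ)+2))/(3*(2*(n:ℝ)+1)) := by
      field_simp
      ring
    rw [Real.dist_eq, e, abs_div,
      abs_of_pos (show (0:ℝ) < 3*(2*(n:ℝ)+1) by positivity)]
    have habs : |3*(k:ℝ) - (4*(n:ℝ)+2)| ≤ 2 := by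
      rw [abs_le]; constructor <;> linarith
    have hnn : (0:ℝ) ≤ (n:ℝ) := Nat.cast_nonneg n
    calc |3*(k:ℝ) - (4*(n:ℝ)+2)| / (3*(2*(n:ℝ)+1)) ≤ 2 / (3*(2*(n:ℝ)+1)) := by gcongr
      _ ≤ 2 / ((n:ℝ)+1) := by gcongr <;> linarith
  · exact Filter.Tendsto.div_atTop tendsto_const_nhds
      (Filter.tendsto_atTop_add_const_right _ 1 tendsto_natCast_atTop_atTop)

theorem stmt18 :
    ∃ (A : ℤ × ℤ → ℤ × ℤ → Prop) (S : Set (ℤ × ℤ)),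
      IsOrientationZ A ∧ HasDensity S (2 / 3) ∧ IsDom22 A S ∧ IsEff22 A S := by
  refine ⟨ori, Scol, ori_isOrientation, density23, ?_, fun w hw => rec22_eq w hw⟩
  intro w
  by_cases hw : w ∈ Scol
  · unfold rec22
    rw [Set.indicator_of_mem hw]
    exact Nat.le_add_right 2 _
  · rw [rec22_eq w hw]
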